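/- Let m be a positive odd integer and let α, β be real numbers with 0 < α ≤ β. Then for every t ∈ (1,∞), ψ^(m)(α+t)/ψ^(m)(β+t) ≤ ψ^(m)(α+1)/ψ^(m)(β+1). -/

import Mathlib

set_option maxHeartbeats 1000000

/-- The digamma (psi) function: logarithmic derivative of the Gamma function. -/
noncomputable def psi (t : ℝ) : ℝ := deriv Real.Gamma t / Real.Gamma t

open Set Filter Topology


noncomputable def P (p : ℕ) (x : ℝ) : ℝ := ∑' n : ℕ, 1 / ((n : ℝ) + x) ^ p

lemma summable_P {p : ℕ} (hp : 2 ≤ p) {x : ℝ} (hx : 0 < x) :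
    Summable (fun n : ℕ => 1 / ((n : ℝ) + x) ^ p) := by
  have hbase : Summable (fun n : ℕ => 1 / ((n : ℝ) + 1) ^ p) := by
    have := (Real.summable_one_div_nat_pow (p := p)).2 hp
    exact_mod_cast (summable_nat_add_iff 1).2 this
  refine Summable.of_nonneg_of_le (fun n : ℕ => by positivity)
    (f := fun n : ℕ => (1 / min 1 x) ^ p * (1 / ((n : ℝ) + 1) ^ p)) ?_ (hbase.mul_left _)
  intro n
  show 1 / ((n : ℝ) + x) ^ p ≤ (1 / min 1 x) ^ p * (1 / ((n : ℝ) + 1) ^ p)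
  have hmin : 0 < min 1 x := lt_min one_pos hx
  have hkey : min 1 x * ((n : ℝ) + 1) ≤ (n : ℝ) + x := by
    rcases le_total 1 x with h | h
    · rw [min_eq_left h]; nlinarith [Nat.cast_nonneg (α := ℝ) n]
    · rw [min_eq_right h]; nlinarith [Nat.cast_nonneg (α := ℝ) n]
  have h1 : (0:ℝ) < (n : ℝ) + x := by positivity
  have hrw : (1 / min 1 x) ^ p * (1 / ((n : ℝ) + 1) ^ p)
      = 1 / ((min 1 x) ^ p * ((n:ℝ)+1) ^ p) := by
    rw [div_pow, one_pow, div_mul_div_comm, one_mul]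
  rw [hrw]
  apply one_div_le_one_div_of_le (by positivity)
  calc (min 1 x) ^ p * ((n:ℝ)+1) ^ p = (min 1 x * ((n:ℝ)+1)) ^ p := (mul_pow _ _ _).symm
    _ ≤ ((n:ℝ)+x) ^ p := pow_le_pow_left₀ (by positivity) hkey p

lemma P_pos {p : ℕ} (hp : 2 ≤ p) {x : ℝ} (hx : 0 < x) : 0 < P p x :=
  Summable.tsum_pos (summable_P hp hx) (fun n => by positivity) 0 (by positivity)

lemma hasDerivAt_term {p : ℕ} (hp : 1 ≤ p) (n : ℕ) {y : ℝ} (hy : 0 < (n:ℝ) + y) :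
    HasDerivAt (fun z : ℝ => 1 / ((n : ℝ) + z) ^ p) (-(p:ℝ) / ((n:ℝ) + y) ^ (p+1)) y := by
  have h1 : HasDerivAt (fun z : ℝ => ((n : ℝ) + z) ^ p) ((p:ℝ) * ((n:ℝ)+y)^(p-1) * 1) y :=
    ((hasDerivAt_id y).const_add (n:ℝ)).pow p
  have h2 := h1.inv (by positivity)
  have h3 : HasDerivAt (fun z : ℝ => 1 / ((n : ℝ) + z) ^ p)
      (-((p:ℝ) * ((n:ℝ)+y)^(p-1) * 1) / (((n:ℝ)+y) ^ p) ^ 2) y := by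
    simp only [one_div]; exact h2
  convert h3 using 1
  have hpow : ((n:ℝ)+y) ^ (p-1) * ((n:ℝ)+y) ^ (p+1) = (((n:ℝ)+y) ^ p) ^ 2 := by
    rw [← pow_add, ← pow_mul]; congr 1; omega
  rw [div_eq_div_iff (by positivity) (by positivity)]
  rw [mul_one, neg_mul, neg_mul, mul_assoc, hpow]

lemma hasDerivAt_P {p : ℕ} (hp : 2 ≤ p) {x : ℝ} (hx : 0 < x) :
    HasDerivAt (P p) (-(p : ℝ) * P (p+1) x) x := by
  have hx2 : 0 < x / 2 := by linarith
  have hu : Summable (fun n : ℕ => (p : ℝ) * (1 / ((n : ℝ) + x/2) ^ (p+1))) :=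
    (summable_P (p := p+1) (by omega) hx2).mul_left (p:ℝ)
  have key : HasDerivAt (fun z => ∑' n : ℕ, 1 / ((n : ℝ) + z) ^ p)
      (∑' n : ℕ, (-(p:ℝ) / ((n : ℝ) + x) ^ (p+1))) x := by
    refine hasDerivAt_tsum_of_isPreconnected (𝕜 := ℝ) (t := Ioi (x/2)) (y₀ := x) (y := x)
      (g := fun (n : ℕ) (z : ℝ) => 1 / ((n : ℝ) + z) ^ p)
      (g' := fun (n : ℕ) (y : ℝ) => -(p:ℝ) / ((n:ℝ) + y) ^ (p+1)) hu
      isOpen_Ioi isPreconnected_Ioi ?_ ?_ (mem_Ioi.2 (by linarith)) (summable_P hp hx)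
      (mem_Ioi.2 (by linarith))
    · intro n y hy
      have hny : (0:ℝ) < (n:ℝ) + y := by
        have h1 := mem_Ioi.1 hy
        have h2 := Nat.cast_nonneg (α := ℝ) n
        linarith
      exact hasDerivAt_term (by omega) n hny
    · intro n y hy
      have hy' : x/2 < y := mem_Ioi.1 hy
      have hny : (0:ℝ) < (n:ℝ) + x/2 := by positivity
      have hny' : (0:ℝ) < (n:ℝ) + y := by linarith
      show ‖-(p:ℝ) / ((n:ℝ) + y) ^ (p+1)‖ ≤ _
      rw [norm_div, Real.norm_eq_abs, Real.norm_eq_abs, abs_neg,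
        abs_of_nonneg (by positivity : (0:ℝ) ≤ (p:ℝ)),
        abs_of_nonneg (by positivity : (0:ℝ) ≤ ((n:ℝ)+y)^(p+1))]
      rw [mul_one_div]
      exact div_le_div_of_nonneg_left (by positivity) (by positivity)
        (pow_le_pow_left₀ hny.le (by linarith) _)
  have heq : (∑' n : ℕ, (-(p:ℝ) / ((n : ℝ) + x) ^ (p+1))) = -(p:ℝ) * P (p+1) x := by
    rw [P, ← tsum_mul_left]
    congr 1; ext n; ring
  rw [← heq]
  exact key


noncomputable def G (x : ℝ) : ℝ := ∑' n : ℕ, (1 / ((n : ℝ) + 1) - 1 / ((n : ℝ) + x))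

lemma summable_G {x : ℝ} (hx : 0 < x) :
    Summable (fun n : ℕ => 1 / ((n : ℝ) + 1) - 1 / ((n : ℝ) + x)) := by
  have hb : Summable (fun n : ℕ => (|x - 1| / min 1 x) * (1 / ((n : ℝ) + 1) ^ 2)) := by
    apply Summable.mul_left
    have := (Real.summable_one_div_nat_pow (p := 2)).2 one_lt_two
    exact_mod_cast (summable_nat_add_iff 1).2 this
  apply Summable.of_abs
  refine Summable.of_nonneg_of_le (fun n => abs_nonneg _) (fun n => ?_) hb
  have hmin : 0 < min 1 x := lt_min one_pos hx
  have h1 : (0:ℝ) < (n : ℝ) + 1 := by positivity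
  have h2 : (0:ℝ) < (n : ℝ) + x := by positivity
  have key : min 1 x * ((n : ℝ) + 1) ≤ (n : ℝ) + x := by
    rcases le_total 1 x with h | h
    · rw [min_eq_left h]; nlinarith [Nat.cast_nonneg (α := ℝ) n]
    · rw [min_eq_right h]; nlinarith [Nat.cast_nonneg (α := ℝ) n]
  have heq : 1 / ((n : ℝ) + 1) - 1 / ((n : ℝ) + x) = (x - 1) / (((n:ℝ)+1) * ((n:ℝ)+x)) := by
    rw [div_sub_div _ _ h1.ne' h2.ne']
    congr 1
    ring
  have htarget : |x - 1| / min 1 x * (1 / ((n : ℝ) + 1) ^ 2)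
      = |x - 1| / (min 1 x * ((n:ℝ)+1)^2) := by
    rw [div_mul_div_comm, mul_one]
  rw [heq, abs_div, abs_of_pos (show (0:ℝ) < ((n:ℝ)+1) * ((n:ℝ)+x) by positivity), htarget]
  apply div_le_div_of_nonneg_left (abs_nonneg _) (by positivity)
  calc min 1 x * ((n:ℝ)+1)^2 = (min 1 x * ((n:ℝ)+1)) * ((n:ℝ)+1) := by ring
    _ ≤ ((n:ℝ)+x) * ((n:ℝ)+1) := by nlinarith
    _ = ((n:ℝ)+1) * ((n:ℝ)+x) := by ring

lemma G_rec {x : ℝ} (hx : 0 < x) : G (x + 1) = G x + 1 / x := by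
  have h1 := summable_G (by linarith : (0:ℝ) < x + 1)
  have h2 := summable_G hx
  have htel : HasSum (fun n : ℕ => 1 / ((n : ℝ) + x) - 1 / (((n:ℕ) + 1 : ℕ) + x)) (1 / x) := by
    rw [hasSum_iff_tendsto_nat_of_nonneg]
    · have hps : ∀ N : ℕ, ∑ n ∈ Finset.range N, (1 / ((n : ℝ) + x) - 1 / (((n:ℕ) + 1 : ℕ) + x))
          = 1 / ((0:ℝ) + x) - 1 / ((N : ℝ) + x) := fun N => by
        simpa using Finset.sum_range_sub' (fun n : ℕ => 1 / ((n : ℝ) + x)) N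
      simp only [hps, zero_add]
      have : Tendsto (fun N : ℕ => 1 / ((N : ℝ) + x)) atTop (𝓝 0) := by
        apply Tendsto.comp tendsto_inv_atTop_zero ?_ |>.congr (fun n => by rw [Function.comp_apply, one_div])
        exact tendsto_atTop_add_const_right atTop x tendsto_natCast_atTop_atTop
      simpa using (tendsto_const_nhds (x := 1 / x)).sub this
    · intro n
      have hn1 : (0:ℝ) < (n:ℝ) + x := by positivity
      have hn2 : (0:ℝ) < ((n:ℕ) + 1 : ℕ) + x := by push_cast; linarith
      have : ((n:ℝ) + x) ≤ (((n:ℕ) + 1 : ℕ) : ℝ) + x := by push_cast; linarith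
      have := one_div_le_one_div_of_le hn1 this
      linarith
  have : G (x+1) - G x = 1 / x := by
    rw [G, G, ← Summable.tsum_sub h1 h2]
    rw [← htel.tsum_eq]
    congr 1; ext n
    push_cast
    ring
  linarith

lemma G_mono : MonotoneOn G (Ioi (0:ℝ)) := by
  intro a ha b hb hab
  have ha' : (0:ℝ) < a := ha
  have hb' : (0:ℝ) < b := hb
  apply Summable.tsum_le_tsum _ (summable_G ha') (summable_G hb')
  intro n
  have h1 : (0:ℝ) < (n : ℝ) + a := by positivity
  have h2 : (0:ℝ) < (n : ℝ) + b := by positivity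
  have := one_div_le_one_div_of_le h1 (by linarith : (n:ℝ) + a ≤ (n:ℝ) + b)
  linarith

local notation "f" => Real.log ∘ Real.Gamma

lemma diff_f {x : ℝ} (hx : 0 < x) : DifferentiableAt ℝ f x := by
  refine ((Real.differentiableAt_Gamma ?_).log (Real.Gamma_ne_zero ?_)) <;>
  exact fun m => ne_of_gt (by have := Nat.cast_nonneg (α := ℝ) m; linarith)

lemma deriv_f_eq_psi {x : ℝ} (hx : 0 < x) : deriv f x = psi x := by
  rw [Function.comp_def, deriv.log (Real.differentiableAt_Gamma
    (fun m => ne_of_gt (by have := Nat.cast_nonneg (α := ℝ) m; linarith)))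
    (Real.Gamma_pos_of_pos hx).ne', psi]

lemma psi_mono : MonotoneOn psi (Ioi (0:ℝ)) := by
  have hc : ConvexOn ℝ (Ioi 0) f := Real.convexOn_log_Gamma
  intro a ha b hb hab
  rcases eq_or_lt_of_le hab with rfl | hab'
  · exact le_rfl
  rw [← deriv_f_eq_psi ha, ← deriv_f_eq_psi hb]
  calc deriv f a ≤ slope f a b := hc.deriv_le_slope ha hb hab' (diff_f ha)
    _ ≤ deriv f b := hc.slope_le_deriv ha hb hab' (diff_f hb)

lemma psi_rec {x : ℝ} (hx : 0 < x) : psi (x + 1) = psi x + 1 / x := by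
  rw [← deriv_f_eq_psi (by linarith : (0:ℝ) < x + 1), ← deriv_f_eq_psi hx]
  rw [← deriv_comp_add_const, one_div, ← Real.deriv_log,
    ← deriv_add (diff_f hx) (Real.differentiableAt_log hx.ne')]
  apply Filter.EventuallyEq.deriv_eq
  filter_upwards [eventually_gt_nhds hx] with y hy
  simp only [Pi.add_apply, Function.comp_apply, Real.Gamma_add_one hy.ne',
    Real.log_mul hy.ne' (Real.Gamma_pos_of_pos hy).ne']
  ring

lemma rec_sum (F : ℝ → ℝ) (hrec : ∀ x > (0:ℝ), F (x+1) = F x + 1/x) {x : ℝ} (hx : 0 < x)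
    (N : ℕ) : F (x + N) = F x + ∑ j ∈ Finset.range N, 1 / (x + j) := by
  induction N with
  | zero => simp
  | succ N ih =>
    have h1 : x + (N + 1 : ℕ) = (x + N) + 1 := by push_cast; ring
    have h2 : (0:ℝ) < x + N := by positivity
    rw [h1, hrec _ h2, ih, Finset.sum_range_succ]
    ring

lemma diff_small (H : ℝ → ℝ) (hm : MonotoneOn H (Ioi (0:ℝ)))
    (hrec : ∀ y > (0:ℝ), H (y+1) = H y + 1/y) {x : ℝ} (hx : 0 < x) {N : ℕ} (hN : 1 ≤ N) :
    |H (x + N) - H (1 + N)| ≤ ((⌈x⌉₊ + 1 : ℕ) : ℝ) / N := by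
  set K : ℕ := ⌈x⌉₊ + 1 with hK
  have hm0 : 0 < min x 1 := lt_min hx one_pos
  have hxK : x ≤ K := by
    calc x ≤ ⌈x⌉₊ := Nat.le_ceil x
      _ ≤ K := by exact_mod_cast Nat.le_succ _
  have h1K : (1:ℝ) ≤ K := by exact_mod_cast Nat.one_le_iff_ne_zero.2 (by omega)
  have hNpos : (0:ℝ) < N := by exact_mod_cast hN
  -- bound over the interval
  have hup : H (min x 1 + N + K) - H (min x 1 + N) ≤ (K:ℝ) / N := by
    have := rec_sum H hrec (by positivity : (0:ℝ) < min x 1 + N) K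
    rw [this]
    have hb : ∑ j ∈ Finset.range K, 1 / (min x 1 + N + (j:ℝ)) ≤ ∑ j ∈ Finset.range K, 1 / (N:ℝ) := by
      apply Finset.sum_le_sum
      intro j _
      apply one_div_le_one_div_of_le hNpos
      have := Nat.cast_nonneg (α := ℝ) j
      linarith
    simp only [Finset.sum_const, Finset.card_range, nsmul_eq_mul] at hb
    rw [mul_one_div] at hb
    linarith
  have mem1 : ∀ z : ℝ, min x 1 ≤ z → z ∈ Ioi (0:ℝ) → True := fun _ _ _ => trivial
  have hxN : H (x + N) ≤ H (min x 1 + N + K) := by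
    apply hm (by simp only [mem_Ioi]; positivity) (by simp only [mem_Ioi]; positivity)
    have : min x 1 + K ≥ x := by
      rcases le_total x 1 with h | h
      · rw [min_eq_left h]; linarith
      · rw [min_eq_right h]; linarith
    linarith
  have hxN' : H (min x 1 + N) ≤ H (x + N) := by
    apply hm (by simp only [mem_Ioi]; positivity) (by simp only [mem_Ioi]; positivity)
    have := min_le_left x 1
    linarith
  have h1N : H (1 + N) ≤ H (min x 1 + N + K) := by
    apply hm (by simp only [mem_Ioi]; positivity) (by simp only [mem_Ioi]; positivity)
    have : min x 1 + K ≥ 1 := by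
      rcases le_total x 1 with h | h
      · rw [min_eq_left h]; linarith
      · rw [min_eq_right h]; linarith
    linarith
  have h1N' : H (min x 1 + N) ≤ H (1 + N) := by
    apply hm (by simp only [mem_Ioi]; positivity) (by simp only [mem_Ioi]; positivity)
    have := min_le_right x 1
    linarith
  rw [abs_sub_le_iff]
  constructor <;> linarith

lemma diff_const (F G : ℝ → ℝ) (hFm : MonotoneOn F (Ioi (0:ℝ)))
    (hGm : MonotoneOn G (Ioi (0:ℝ))) (hFr : ∀ y > (0:ℝ), F (y+1) = F y + 1/y)
    (hGr : ∀ y > (0:ℝ), G (y+1) = G y + 1/y) {x : ℝ} (hx : 0 < x) :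
    F x - G x = F 1 - G 1 := by
  set D : ℝ := (F x - G x) - (F 1 - G 1) with hD
  have key : ∀ N : ℕ, 1 ≤ N → |D| ≤ 2 * ((⌈x⌉₊ + 1 : ℕ) : ℝ) / N := by
    intro N hN
    have e1 := rec_sum F hFr hx N
    have e2 := rec_sum G hGr hx N
    have e3 := rec_sum F hFr one_pos N
    have e4 := rec_sum G hGr one_pos N
    have hDeq : D = (F (x + N) - F (1 + N)) - (G (x + N) - G (1 + N)) := by
      rw [hD, e1, e2, e3, e4]; ring
    have b1 := diff_small F hFm hFr hx hN
    have b2 := diff_small G hGm hGr hx hN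
    have hNpos : (0:ℝ) < N := by exact_mod_cast hN
    calc |D| ≤ |F (x + N) - F (1 + N)| + |G (x + N) - G (1 + N)| := by
          rw [hDeq]; exact abs_sub _ _
      _ ≤ ((⌈x⌉₊ + 1 : ℕ) : ℝ) / N + ((⌈x⌉₊ + 1 : ℕ) : ℝ) / N := add_le_add b1 b2
      _ = 2 * ((⌈x⌉₊ + 1 : ℕ) : ℝ) / N := by ring
  have htend : Tendsto (fun N : ℕ => 2 * ((⌈x⌉₊ + 1 : ℕ) : ℝ) / N) atTop (𝓝 0) :=
    tendsto_const_div_atTop_nhds_zero_nat _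
  have habs : |D| ≤ 0 := by
    apply ge_of_tendsto htend
    filter_upwards [eventually_ge_atTop 1] with N hN using key N hN
  have : D = 0 := abs_eq_zero.1 (le_antisymm habs (abs_nonneg _))
  rw [hD] at this
  linarith

lemma hasDerivAt_G {x : ℝ} (hx : 0 < x) : HasDerivAt G (P 2 x) x := by
  have hx2 : 0 < x / 2 := by linarith
  have hu : Summable (fun n : ℕ => 1 / ((n : ℝ) + x/2) ^ 2) := summable_P le_rfl hx2
  have key : HasDerivAt (fun z => ∑' n : ℕ, (1 / ((n : ℝ) + 1) - 1 / ((n : ℝ) + z)))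
      (∑' n : ℕ, 1 / ((n : ℝ) + x) ^ 2) x := by
    refine hasDerivAt_tsum_of_isPreconnected (𝕜 := ℝ) (t := Ioi (x/2)) (y₀ := x) (y := x)
      (g := fun (n : ℕ) (z : ℝ) => 1 / ((n : ℝ) + 1) - 1 / ((n : ℝ) + z))
      (g' := fun (n : ℕ) (y : ℝ) => 1 / ((n:ℝ) + y) ^ 2) hu
      isOpen_Ioi isPreconnected_Ioi ?_ ?_ (mem_Ioi.2 (by linarith)) (summable_G hx)
      (mem_Ioi.2 (by linarith))
    · intro n y hy
      have hny : (0:ℝ) < (n:ℝ) + y := by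
        have h1 := mem_Ioi.1 hy
        have h2 := Nat.cast_nonneg (α := ℝ) n
        linarith
      have h1 : HasDerivAt (fun z : ℝ => 1 / ((n : ℝ) + z) ^ 1) (-(1:ℝ) / ((n:ℝ)+y)^(1+1)) y := by
        have := hasDerivAt_term le_rfl n hny
        norm_num at this ⊢
        exact this
      have h2 := (h1.const_sub (1 / ((n : ℝ) + 1)))
      have h3 : HasDerivAt (fun z : ℝ => 1 / ((n : ℝ) + 1) - 1 / ((n : ℝ) + z))
          (-(-(1:ℝ) / ((n:ℝ)+y)^(1+1))) y := by
        simpa only [pow_one] using h2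
      refine h3.congr_deriv ?_
      ring
    · intro n y hy
      have hy' : x/2 < y := mem_Ioi.1 hy
      have hny : (0:ℝ) < (n:ℝ) + x/2 := by positivity
      have hny' : (0:ℝ) < (n:ℝ) + y := by linarith
      show ‖1 / ((n:ℝ) + y) ^ 2‖ ≤ _
      rw [Real.norm_eq_abs, abs_of_nonneg (by positivity)]
      exact div_le_div_of_nonneg_left zero_le_one (by positivity)
        (pow_le_pow_left₀ hny.le (by linarith) _)
  exact key

lemma psi_eq_G {x : ℝ} (hx : 0 < x) : psi x = G x + (psi 1 - G 1) := by
  have := diff_const psi G psi_mono G_mono (fun y hy => psi_rec hy) (fun y hy => G_rec hy) hx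
  linarith

lemma iteratedDeriv_psi : ∀ k : ℕ, 1 ≤ k → ∀ x : ℝ, 0 < x →
    iteratedDeriv k psi x = (-1) ^ (k+1) * (Nat.factorial k) * P (k+1) x := by
  intro k
  induction k with
  | zero => omega
  | succ k ih =>
    intro hk x hx
    rcases Nat.lt_or_ge k 1 with h | hk1
    · have hk0 : k = 0 := by omega
      subst hk0
      rw [iteratedDeriv_one]
      have hev : psi =ᶠ[𝓝 x] (fun y => G y + (psi 1 - G 1)) := by
        filter_upwards [IsOpen.mem_nhds isOpen_Ioi (mem_Ioi.2 hx)] with y hy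
        exact psi_eq_G (mem_Ioi.1 hy)
      rw [hev.deriv_eq]
      have hG : HasDerivAt (fun y => G y + (psi 1 - G 1)) (P 2 x) x :=
        (hasDerivAt_G hx).add_const _
      rw [hG.deriv]
      norm_num
    · rw [iteratedDeriv_succ]
      have hev : iteratedDeriv k psi =ᶠ[𝓝 x]
          (fun y => (-1 : ℝ) ^ (k+1) * (Nat.factorial k) * P (k+1) y) := by
        filter_upwards [IsOpen.mem_nhds isOpen_Ioi (mem_Ioi.2 hx)] with y hy
        exact ih hk1 y (mem_Ioi.1 hy)
      rw [hev.deriv_eq]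
      have hd : HasDerivAt (fun y => (-1 : ℝ) ^ (k+1) * (Nat.factorial k) * P (k+1) y)
          (((-1 : ℝ) ^ (k+1) * (Nat.factorial k)) * (-((k:ℝ)+1) * P (k+2) x)) x := by
        have := (hasDerivAt_P (p := k+1) (by omega) hx).const_mul
          ((-1 : ℝ) ^ (k+1) * (Nat.factorial k))
        refine this.congr_deriv ?_
        push_cast
        ring
      rw [hd.deriv]
      rw [Nat.factorial_succ]
      push_cast
      ring

lemma P_cauchy_schwarz {p : ℕ} (hp : 2 ≤ p) {x : ℝ} (hx : 0 < x) :
    P (p+1) x ^ 2 ≤ P p x * P (p+2) x := by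
  set a : ℕ → ℝ := fun n => Real.sqrt (1 / ((n:ℝ) + x) ^ p) with ha
  set c : ℕ → ℝ := fun n => Real.sqrt (1 / ((n:ℝ) + x) ^ (p+2)) with hc
  have hterm : ∀ n : ℕ, a n * c n = 1 / ((n:ℝ) + x) ^ (p+1) := by
    intro n
    have hnx : (0:ℝ) < (n:ℝ) + x := by positivity
    rw [ha, hc, ← Real.sqrt_mul (by positivity)]
    rw [show 1 / ((n:ℝ) + x) ^ p * (1 / ((n:ℝ) + x) ^ (p+2)) = (1 / ((n:ℝ) + x) ^ (p+1)) ^ 2 by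
      rw [div_mul_div_comm, one_mul, ← pow_add, div_pow, one_pow, ← pow_mul]
      congr 2
      ring]
    exact Real.sqrt_sq (by positivity)
  have ha2 : ∀ n : ℕ, a n ^ 2 = 1 / ((n:ℝ) + x) ^ p := fun n =>
    Real.sq_sqrt (by positivity)
  have hc2 : ∀ n : ℕ, c n ^ 2 = 1 / ((n:ℝ) + x) ^ (p+2) := fun n =>
    Real.sq_sqrt (by positivity)
  have hfin : ∀ s : Finset ℕ, (∑ n ∈ s, 1 / ((n:ℝ) + x) ^ (p+1)) ^ 2 ≤ P p x * P (p+2) x := by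
    intro s
    have hcs := Finset.sum_mul_sq_le_sq_mul_sq s a c
    simp only [hterm, ha2, hc2] at hcs
    refine hcs.trans (mul_le_mul ?_ ?_ ?_ ?_)
    · exact Summable.sum_le_tsum s (fun n _ => by positivity) (summable_P hp hx)
    · exact Summable.sum_le_tsum s (fun n _ => by positivity) (summable_P (by omega) hx)
    · exact Finset.sum_nonneg (fun n _ => by positivity)
    · exact (P_pos hp hx).le
  have htend : Tendsto (fun N : ℕ => (∑ n ∈ Finset.range N, 1 / ((n:ℝ) + x) ^ (p+1)) ^ 2)
      atTop (𝓝 (P (p+1) x ^ 2)) := by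
    exact ((summable_P (by omega) hx).hasSum.tendsto_sum_nat).pow 2
  exact le_of_tendsto htend (Eventually.of_forall (fun N => hfin _))

lemma hasDerivAt_Q {p : ℕ} (hp : 2 ≤ p) {x : ℝ} (hx : 0 < x) :
    HasDerivAt (fun y => P (p+1) y / P p y)
      ((-((p:ℝ)+1) * P (p+2) x * P p x - P (p+1) x * (-(p:ℝ) * P (p+1) x)) / (P p x) ^ 2) x := by
  have h1 : HasDerivAt (P (p+1)) (-((p:ℝ)+1) * P (p+2) x) x := by
    have := hasDerivAt_P (p := p+1) (by omega) hx
    convert this using 2 <;> push_cast <;> ring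
  exact h1.div (hasDerivAt_P hp hx) (P_pos hp hx).ne'

lemma Q_antitone {p : ℕ} (hp : 2 ≤ p) : AntitoneOn (fun y => P (p+1) y / P p y) (Ioi (0:ℝ)) := by
  have hderiv : ∀ x ∈ interior (Ioi (0:ℝ)), deriv (fun y => P (p+1) y / P p y) x ≤ 0 := by
    intro x hx
    rw [interior_Ioi] at hx
    have hx' : (0:ℝ) < x := hx
    rw [(hasDerivAt_Q hp hx').deriv]
    apply div_nonpos_of_nonpos_of_nonneg _ (by positivity)
    have hcs := P_cauchy_schwarz hp hx'
    have h1 := P_pos hp hx'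
    have h2 := P_pos (p := p+1) (by omega) hx'
    have h3 := P_pos (p := p+2) (by omega) hx'
    nlinarith
  apply antitoneOn_of_deriv_nonpos (convex_Ioi 0) _ _ hderiv
  · intro x hx
    exact ((hasDerivAt_Q hp hx).continuousAt.continuousWithinAt)
  · intro x hx
    rw [interior_Ioi] at hx
    exact (hasDerivAt_Q hp hx).differentiableAt.differentiableWithinAt

theorem V_upper_bound_gt_one (m : ℕ) (hm : 0 < m) (hodd : Odd m) (α β : ℝ)
    (hα : 0 < α) (hαβ : α ≤ β) (t : ℝ) (ht : t ∈ Set.Ioi (1 : ℝ)) :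
    iteratedDeriv m psi (α + t) / iteratedDeriv m psi (β + t) ≤
      iteratedDeriv m psi (α + 1) / iteratedDeriv m psi (β + 1) := by
  have ht' : 1 < t := ht
  have hp : 2 ≤ m + 1 := by omega
  -- component derivative
  have hcomp : ∀ c : ℝ, 0 < c → ∀ s : ℝ, 1 ≤ s →
      HasDerivAt (fun y => P (m+1) (c + y)) (-((m:ℝ)+1) * P (m+2) (c + s)) s := by
    intro c hc s hs
    have hcs : 0 < c + s := by linarith
    have h1 : HasDerivAt (fun y : ℝ => c + y) 1 s := (hasDerivAt_id s).const_add c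
    have h2 := (hasDerivAt_P hp hcs).comp s h1
    simpa [Function.comp_def] using h2.congr_deriv (by push_cast; ring)
  -- the ratio function is antitone on [1, ∞)
  have hF : AntitoneOn (fun s => P (m+1) (α + s) / P (m+1) (β + s)) (Ici (1:ℝ)) := by
    have hβ : 0 < β := lt_of_lt_of_le hα hαβ
    have hder : ∀ s : ℝ, 1 ≤ s → HasDerivAt (fun y => P (m+1) (α + y) / P (m+1) (β + y))
        ((-((m:ℝ)+1) * P (m+2) (α + s) * P (m+1) (β + s) -
          P (m+1) (α + s) * (-((m:ℝ)+1) * P (m+2) (β + s))) / (P (m+1) (β + s)) ^ 2) s := by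
      intro s hs
      exact (hcomp α hα s hs).div (hcomp β hβ s hs)
        (P_pos hp (by linarith : (0:ℝ) < β + s)).ne'
    apply antitoneOn_of_deriv_nonpos (convex_Ici 1)
    · intro s hs
      exact (hder s hs).continuousAt.continuousWithinAt
    · intro s hs
      rw [interior_Ici] at hs
      exact (hder s hs.le).differentiableAt.differentiableWithinAt
    · intro s hs
      rw [interior_Ici] at hs
      have hs' : (1:ℝ) ≤ s := hs.le
      rw [(hder s hs').deriv]
      apply div_nonpos_of_nonpos_of_nonneg _ (by positivity)
      have ha : (0:ℝ) < α + s := by linarith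
      have hb : (0:ℝ) < β + s := by linarith
      have hab : α + s ≤ β + s := by linarith
      -- use Q antitone
      have hQ := Q_antitone hp (mem_Ioi.2 ha) (mem_Ioi.2 hb) hab
      simp only at hQ
      have hPa := P_pos hp ha
      have hPb := P_pos hp hb
      rw [div_le_div_iff₀ hPb hPa] at hQ
      have hm1 : (0:ℝ) ≤ (m:ℝ) + 1 := by positivity
      -- hQ : P (m+1+1) (β+s) * P (m+1) (α+s) ≤ P (m+1+1) (α+s) * P (m+1) (β+s)
      nlinarith [hQ]
  -- rewrite iterated derivatives
  have heven : ((-1:ℝ)) ^ (m+1) = 1 := (hodd.add_one).neg_one_pow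
  have hfac : (0:ℝ) < (Nat.factorial m : ℝ) := by exact_mod_cast m.factorial_pos
  have hrw : ∀ z : ℝ, 0 < z →
      iteratedDeriv m psi z = (Nat.factorial m : ℝ) * P (m+1) z := by
    intro z hz
    rw [iteratedDeriv_psi m hm z hz, heven, one_mul]
  have hβ : 0 < β := lt_of_lt_of_le hα hαβ
  rw [hrw _ (by linarith : (0:ℝ) < α + t), hrw _ (by linarith : (0:ℝ) < β + t),
    hrw _ (by linarith : (0:ℝ) < α + 1), hrw _ (by linarith : (0:ℝ) < β + 1),
    mul_div_mul_left _ _ hfac.ne', mul_div_mul_left _ _ hfac.ne']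
  exact hF (mem_Ici.2 le_rfl) (mem_Ici.2 ht'.le) ht'.le
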